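/- Let G be a finite p-group of nilpotency class 2 such that the commutator subgroup G' is cyclic. Then every class-preserving automorphism of G is inner. -/

import Mathlib

open scoped commutatorElement
variable {G : Type*}

/-- An automorphism is class-preserving if it sends each element to a conjugate of itself. -/
def IsClassPreserving [Group G] (α : G ≃* G) : Prop :=
  ∀ x : G, ∃ g : G, α x = g⁻¹ * x * g

/-- An automorphism is inner if it is conjugation by a fixed element. -/
def IsInnerAut [Group G] (α : G ≃* G) : Prop :=
  ∃ g : G, ∀ x : G, α x = g⁻¹ * x * g

/-- An automorphism is central if it induces the identity on `G/Z(G)`. -/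
def IsCentralAut [Group G] (α : G ≃* G) : Prop :=
  ∀ x : G, x⁻¹ * α x ∈ Subgroup.center G

section Aux

variable [Group G]

lemma comm_mem_commutator' (x y : G) : ⁅x, y⁆ ∈ commutator G := by
  rw [commutator_def]
  exact Subgroup.commutator_mem_commutator (Subgroup.mem_top x) (Subgroup.mem_top y)

lemma comm_central' (hc : commutator G ≤ Subgroup.center G) (x y z : G) :
    z * ⁅x, y⁆ = ⁅x, y⁆ * z :=
  Subgroup.mem_center_iff.mp (hc (comm_mem_commutator' x y)) z

lemma comm_mul_left' (hc : commutator G ≤ Subgroup.center G) (a b y : G) :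
    ⁅a * b, y⁆ = ⁅a, y⁆ * ⁅b, y⁆ := by
  calc ⁅a * b, y⁆ = a * ⁅b, y⁆ * a⁻¹ * ⁅a, y⁆ := by
        simp only [commutatorElement_def]; group
    _ = ⁅b, y⁆ * a * a⁻¹ * ⁅a, y⁆ := by rw [comm_central' hc b y a]
    _ = ⁅b, y⁆ * ⁅a, y⁆ := by group
    _ = ⁅a, y⁆ * ⁅b, y⁆ := comm_central' hc a y ⁅b, y⁆

lemma comm_mul_right' (hc : commutator G ≤ Subgroup.center G) (x a b : G) :
    ⁅x, a * b⁆ = ⁅x, a⁆ * ⁅x, b⁆ := by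
  calc ⁅x, a * b⁆ = ⁅x, a⁆ * (a * ⁅x, b⁆ * a⁻¹) := by
        simp only [commutatorElement_def]; group
    _ = ⁅x, a⁆ * (⁅x, b⁆ * a * a⁻¹) := by rw [comm_central' hc x b a]
    _ = ⁅x, a⁆ * ⁅x, b⁆ := by group

lemma comm_pow_left' (hc : commutator G ≤ Subgroup.center G) (x y : G) :
    ∀ n : ℕ, ⁅x ^ n, y⁆ = ⁅x, y⁆ ^ n
  | 0 => by simp
  | n + 1 => by
      rw [pow_succ, comm_mul_left' hc, comm_pow_left' hc x y n, pow_succ]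

lemma mem_center_of_comm' {x : G} (h : ∀ y : G, ⁅x, y⁆ = 1) : x ∈ Subgroup.center G :=
  Subgroup.mem_center_iff.mpr fun g =>
    (commutatorElement_eq_one_iff_mul_comm.mp (h g)).symm

end Aux

/-- A finite p-group of class 2 with cyclic commutator subgroup has all class-preserving
automorphisms inner. -/
theorem stmt_4 (G : Type*) [Group G] [Finite G] (p : ℕ) [Fact p.Prime]
    (hG : IsPGroup p G) (hclass2 : commutator G ≤ Subgroup.center G)
    (hcyc : IsCyclic ↥(commutator G)) :
    ∀ α : G ≃* G, IsClassPreserving α → IsInnerAut α := by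
  intro α hα
  classical
  set Z := Subgroup.center G with hZdef
  -- the commutator subgroup is a commutative group
  letI : CommGroup ↥(commutator G) :=
    { (inferInstance : Group ↥(commutator G)) with
      mul_comm := fun a b =>
        Subtype.ext (Subgroup.mem_center_iff.mp (hclass2 b.2) (a : G)) }
  -- G/Z is a commutative group
  letI : CommGroup (G ⧸ Z) :=
    { (inferInstance : Group (G ⧸ Z)) with
      mul_comm := by
        intro a b
        induction a using QuotientGroup.induction_on with | H x => ?_
        induction b using QuotientGroup.induction_on with | H y => ?_
        rw [← QuotientGroup.mk_mul, ← QuotientGroup.mk_mul, QuotientGroup.eq]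
        have h1 : (x * y)⁻¹ * (y * x) = ⁅y⁻¹, x⁻¹⁆ := by
          simp only [commutatorElement_def]; group
        rw [h1]
        exact hclass2 (comm_mem_commutator' _ _) }
  -- basic consequences of class preservation
  have hmemf : ∀ x : G, x⁻¹ * α x ∈ commutator G := by
    intro x
    obtain ⟨g, hg⟩ := hα x
    have h1 : x⁻¹ * α x = ⁅x⁻¹, g⁻¹⁆ := by
      rw [hg]; simp only [commutatorElement_def]; group
    rw [h1]; exact comm_mem_commutator' _ _
  have hcent : ∀ x : G, x⁻¹ * α x ∈ Z := fun x => hclass2 (hmemf x)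
  have hαZ : ∀ z ∈ Z, α z = z := by
    intro z hz
    obtain ⟨g, hg⟩ := hα z
    rw [hg, Subgroup.mem_center_iff.mp hz g⁻¹]
    group
  -- the homomorphism f : G → G' given by x ↦ x⁻¹ α(x)
  let f : G →* ↥(commutator G) :=
    { toFun := fun x => ⟨x⁻¹ * α x, hmemf x⟩
      map_one' := by ext; simp
      map_mul' := by
        intro x y
        refine Subtype.ext ?_
        show (x * y)⁻¹ * α (x * y) = (x⁻¹ * α x) * (y⁻¹ * α y)
        rw [map_mul]
        have hc1 := Subgroup.mem_center_iff.mp (hcent x) y⁻¹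
        calc (x * y)⁻¹ * (α x * α y)
            = y⁻¹ * (x⁻¹ * α x) * (y⁻¹)⁻¹ * (y⁻¹ * α y) := by group
          _ = (x⁻¹ * α x) * y⁻¹ * (y⁻¹)⁻¹ * (y⁻¹ * α y) := by rw [hc1]
          _ = (x⁻¹ * α x) * (y⁻¹ * α y) := by group }
  have hker : Z ≤ f.ker := by
    intro z hz
    rw [MonoidHom.mem_ker]
    refine Subtype.ext ?_
    show z⁻¹ * α z = 1
    rw [hαZ z hz, inv_mul_cancel]
  let fbar : (G ⧸ Z) →* ↥(commutator G) := QuotientGroup.lift Z f hker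
  -- the adjoint homomorphism Ad : G → Hom(G/Z, G')
  let inner : G → (G →* ↥(commutator G)) := fun x =>
    { toFun := fun y => ⟨⁅x, y⁆, comm_mem_commutator' x y⟩
      map_one' := Subtype.ext (by simp)
      map_mul' := fun a b => Subtype.ext (comm_mul_right' hclass2 x a b) }
  have hinnerker : ∀ x : G, Z ≤ (inner x).ker := by
    intro x z hz
    rw [MonoidHom.mem_ker]
    refine Subtype.ext ?_
    show ⁅x, z⁆ = 1
    exact commutatorElement_eq_one_iff_mul_comm.mpr
      (Subgroup.mem_center_iff.mp hz x)
  let ad0 : G → ((G ⧸ Z) →* ↥(commutator G)) := fun x =>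
    QuotientGroup.lift Z (inner x) (hinnerker x)
  have had0 : ∀ x y : G, ((ad0 x (QuotientGroup.mk y) : ↥(commutator G)) : G) = ⁅x, y⁆ := by
    intro x y
    rfl
  let Ad : G →* ((G ⧸ Z) →* ↥(commutator G)) :=
    { toFun := ad0
      map_one' := by
        ext y
        show ⁅(1 : G), y⁆ = 1
        exact commutatorElement_one_left y
      map_mul' := by
        intro a b
        ext y
        show ⁅a * b, y⁆ = ⁅a, y⁆ * ⁅b, y⁆
        exact comm_mul_left' hclass2 a b y }
  have hAdker : Z ≤ Ad.ker := by
    intro z hz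
    rw [MonoidHom.mem_ker]
    ext y
    show ⁅z, y⁆ = 1
    exact commutatorElement_eq_one_iff_mul_comm.mpr
      (Subgroup.mem_center_iff.mp hz y).symm
  let AD : (G ⧸ Z) →* ((G ⧸ Z) →* ↥(commutator G)) := QuotientGroup.lift Z Ad hAdker
  -- AD is injective
  have hinj : Function.Injective AD := by
    rw [← MonoidHom.ker_eq_bot_iff, eq_bot_iff]
    intro q hq
    induction q using QuotientGroup.induction_on with | H x => ?_
    rw [MonoidHom.mem_ker] at hq
    rw [Subgroup.mem_bot, QuotientGroup.eq_one_iff]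
    apply mem_center_of_comm'
    intro y
    have h1 : AD (QuotientGroup.mk x) (QuotientGroup.mk y) = 1 := by rw [hq]; rfl
    have h2 : ((ad0 x (QuotientGroup.mk y) : ↥(commutator G)) : G) = 1 := by
      rw [show ad0 x (QuotientGroup.mk y) = (1 : ↥(commutator G)) from h1]; rfl
    rw [had0] at h2
    exact h2
  -- the exponent of G/Z divides the order of the commutator subgroup
  have hexp : Monoid.exponent (G ⧸ Z) ∣ Nat.card ↥(commutator G) := by
    apply Monoid.exponent_dvd_of_forall_pow_eq_one
    intro q
    induction q using QuotientGroup.induction_on with | H x => ?_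
    rw [← QuotientGroup.mk_pow, QuotientGroup.eq_one_iff]
    apply mem_center_of_comm'
    intro y
    rw [comm_pow_left' hclass2]
    have h1 : (⟨⁅x, y⁆, comm_mem_commutator' x y⟩ : ↥(commutator G)) ^
        Nat.card ↥(commutator G) = 1 := pow_card_eq_one'
    have h2 := congrArg (Subtype.val) h1
    rwa [SubgroupClass.coe_pow, OneMemClass.coe_one] at h2
  -- the commutator subgroup has enough roots of unity
  letI : IsCyclic (↥(commutator G))ˣ :=
    isCyclic_of_surjective (toUnits (G := ↥(commutator G))).toMonoidHom
      (toUnits (G := ↥(commutator G))).surjective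
  haveI : HasEnoughRootsOfUnity ↥(commutator G) (Monoid.exponent (G ⧸ Z)) := by
    constructor
    · obtain ⟨g, hg⟩ := IsCyclic.exists_ofOrder_eq_natCard (α := ↥(commutator G))
      obtain ⟨k, hk⟩ := hexp
      have hcardpos : 0 < Nat.card ↥(commutator G) := Nat.card_pos
      rw [hk] at hcardpos
      have hkpos : 0 < k := by
        rcases Nat.eq_zero_or_pos k with h | h
        · rw [h, Nat.mul_zero] at hcardpos; exact absurd hcardpos (lt_irrefl 0)
        · exact h
      refine ⟨g ^ k, ?_⟩
      have hdvd : k ∣ Monoid.exponent (G ⧸ Z) * k := ⟨_, mul_comm _ _⟩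
      have horder : orderOf (g ^ k) = Monoid.exponent (G ⧸ Z) := by
        rw [orderOf_pow, hg, hk, Nat.gcd_eq_right hdvd,
          Nat.mul_div_cancel _ hkpos]
      exact horder ▸ IsPrimitiveRoot.orderOf (g ^ k)
    · exact Subgroup.isCyclic _
  -- duality : |Hom(G/Z, G')| = |G/Z|
  obtain ⟨e⟩ := CommGroup.monoidHom_mulEquiv_of_hasEnoughRootsOfUnity (G ⧸ Z) ↥(commutator G)
  let e2 : ((G ⧸ Z) →* ↥(commutator G)) ≃* ((G ⧸ Z) →* (↥(commutator G))ˣ) :=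
    MulEquiv.monoidHomCongrRight (toUnits (G := ↥(commutator G)))
  have hcard : Nat.card ((G ⧸ Z) →* ↥(commutator G)) = Nat.card (G ⧸ Z) :=
    Nat.card_congr (e2.toEquiv.trans e.toEquiv)
  -- AD is surjective
  have hfin1 : Finite ((G ⧸ Z) →* ↥(commutator G)) :=
    Finite.of_injective (fun φ => (φ : (G ⧸ Z) → ↥(commutator G))) DFunLike.coe_injective
  letI := Fintype.ofFinite (G ⧸ Z)
  letI := Fintype.ofFinite ((G ⧸ Z) →* ↥(commutator G))
  have hbij : Function.Bijective AD := by
    rw [Fintype.bijective_iff_injective_and_card]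
    refine ⟨hinj, ?_⟩
    rw [← Nat.card_eq_fintype_card, ← Nat.card_eq_fintype_card, hcard]
  obtain ⟨q, hq⟩ := hbij.surjective fbar
  obtain ⟨x, rfl⟩ := QuotientGroup.mk_surjective q
  refine ⟨x⁻¹, ?_⟩
  intro y
  have hxy : ⁅x, y⁆ = y⁻¹ * α y := by
    have h1 : AD (QuotientGroup.mk x) (QuotientGroup.mk y) = fbar (QuotientGroup.mk y) := by
      rw [hq]
    have h2 : (⟨⁅x, y⁆, comm_mem_commutator' x y⟩ : ↥(commutator G)) =
        ⟨y⁻¹ * α y, hmemf y⟩ := h1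
    exact congrArg Subtype.val h2
  have hz := Subgroup.mem_center_iff.mp (hcent y) y
  refine (calc (x⁻¹)⁻¹ * y * x⁻¹
      = ⁅x, y⁆ * y := by simp only [commutatorElement_def]; group
    _ = (y⁻¹ * α y) * y := by rw [hxy]
    _ = y * (y⁻¹ * α y) := hz.symm
    _ = α y := by group).symm
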